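/- There exists a constant C > 0 such that for all ν > 0, M > 0, γ₀ ∈ (0,1), γ₁ ∈ (0,1], γ₂ ∈ (0,1), t ≥ 0, and every y ∈ ℝ with y ≠ 0: | b''(0,y)·( b(t,y) − b(0,y) ) / ( b(t,y)·b(0,y) ) | ≤ C·(1+M²)·(νt/γ₀²)·exp(−y²/γ₀²), where b'' denotes ∂_y² b. (The left-hand side also extends continuously to y = 0 with the same bound.) -/

import Mathlib

open MeasureTheory Real Filter Set

noncomputable section

/-- The shear flow `b(t,y)` from the paper (eq. (1.6)/(2.1)):
`b(t,y) = y + M·(∫₀^y (γ₀²/√(4νt+γ₀²))·exp(−z²/(4νt+γ₀²)) dz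
  − γ₂·∫₀^y (γ₀²γ₁³/√(4νt+γ₀²γ₁²))·exp(−z²/(4νt+γ₀²γ₁²)) dz)`. -/
def shearFlow (ν M γ₀ γ₁ γ₂ : ℝ) (t y : ℝ) : ℝ :=
  y + M * ((∫ z in (0:ℝ)..y, γ₀^2 / Real.sqrt (4*ν*t + γ₀^2) * Real.exp (-z^2 / (4*ν*t + γ₀^2)))
    - γ₂ * ∫ z in (0:ℝ)..y, γ₀^2 * γ₁^3 / Real.sqrt (4*ν*t + γ₀^2*γ₁^2) *
        Real.exp (-z^2 / (4*ν*t + γ₀^2*γ₁^2)))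

/-- The potential `q = b''/b`, extended continuously at `y = 0`
(where `b(0) = b''(0) = 0`). -/
def qExt (b : ℝ → ℝ) : ℝ → ℝ := fun y =>
  if y = 0 then limUnder (nhdsWithin 0 {(0:ℝ)}ᶜ) (fun z => deriv (deriv b) z / b z)
  else deriv (deriv b) y / b y

/-- The set of Rayleigh quotients `∫|φ'|² + ∫ (b''/b)·φ²` over normalized `φ ∈ H¹(ℝ)`. -/
def lambdaSet (b : ℝ → ℝ) : Set ℝ :=
  { E | ∃ φ : ℝ → ℝ, Differentiable ℝ φ ∧ MemLp φ 2 (volume : Measure ℝ) ∧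
      MemLp (deriv φ) 2 (volume : Measure ℝ) ∧ (∫ y : ℝ, (φ y)^2) = 1 ∧
      E = (∫ y : ℝ, (deriv φ y)^2) + ∫ y : ℝ, qExt b y * (φ y)^2 }

/-- `λ(M,t)`: the infimum of the Rayleigh quotient for the shear flow. -/
def lambdaVal (ν M γ₀ γ₁ γ₂ t : ℝ) : ℝ := sInf (lambdaSet (shearFlow ν M γ₀ γ₁ γ₂ t))

/-- `c` is an eigenvalue of the Rayleigh operator `R_{b,k} = b·Id − b''·(∂_y² − k²)⁻¹`:
there are `ω ∈ L²(ℝ,ℂ)`, `ω ≠ 0`, and a `C²` stream function `ψ` with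
`ψ, ψ', ψ'' ∈ L²`, such that `ψ'' − k²ψ = ω` everywhere and
`(b − c)·ω = b''·ψ` almost everywhere. -/
def IsRayleighEigenvalue (b : ℝ → ℝ) (k : ℝ) (c : ℂ) : Prop :=
  ∃ ω ψ : ℝ → ℂ,
    MemLp ω 2 (volume : Measure ℝ) ∧ ¬ (ω =ᵐ[(volume : Measure ℝ)] (0 : ℝ → ℂ)) ∧
    ContDiff ℝ 2 ψ ∧ MemLp ψ 2 (volume : Measure ℝ) ∧
    MemLp (deriv ψ) 2 (volume : Measure ℝ) ∧ MemLp (deriv (deriv ψ)) 2 (volume : Measure ℝ) ∧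
    (∀ y : ℝ, deriv (deriv ψ) y - (k:ℂ)^2 * ψ y = ω y) ∧
    (∀ᵐ y : ℝ ∂(volume : Measure ℝ),
      ((b y : ℂ) - c) * ω y = ((deriv (deriv b) y : ℝ) : ℂ) * ψ y)

/-! ### Auxiliary infrastructure for the proof of `B3_pointwise_estimate`. -/

namespace B3aux

/-- Gaussian kernel factor. -/
def K (c s : ℝ) : ℝ → ℝ := fun z => c / Real.sqrt s * Real.exp (-z^2 / s)

lemma K_cont (c s : ℝ) : Continuous (K c s) := by unfold K; fun_prop

lemma K_nonneg {c s : ℝ} (hc : 0 ≤ c) (z : ℝ) : 0 ≤ K c s z := by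
  unfold K; positivity

lemma primderiv {h : ℝ → ℝ} (hc : Continuous h) (y : ℝ) :
    HasDerivAt (fun u => ∫ z in (0:ℝ)..u, h z) (h y) y :=
  (hc.integral_hasStrictDerivAt 0 y).hasDerivAt

lemma K_hasDeriv (c s : ℝ) (z : ℝ) :
    HasDerivAt (K c s) (c / Real.sqrt s * (Real.exp (-z^2/s) * (-(2*z)/s))) z := by
  have h1 : HasDerivAt (fun z : ℝ => -z^2/s) (-(2*z)/s) z := by
    have := ((hasDerivAt_pow 2 z).neg).div_const s
    simpa using this
  exact h1.exp.const_mul _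

lemma x_exp_neg_le_one {x : ℝ} (hx : 0 ≤ x) : x * Real.exp (-x) ≤ 1 := by
  have h := Real.add_one_le_exp x
  have hpos := Real.exp_pos x
  rw [Real.exp_neg, mul_inv_le_iff₀ hpos, one_mul]
  linarith

lemma one_sub_exp_neg_le {u : ℝ} : 1 - Real.exp (-u) ≤ u := by
  have := Real.add_one_le_exp (-u)
  linarith

/-- Difference of heat kernels at widths `T + r²` and `r²`. -/
lemma Kdiff {c r T : ℝ} (hc : 0 ≤ c) (hr : 0 < r) (hT : 0 ≤ T) (z : ℝ) :
    |K c (T + r^2) z - K c (r^2) z| ≤ (3/2) * c * T / r^3 := by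
  have hs0 : (0:ℝ) < T + r^2 := by positivity
  have hsr : Real.sqrt (r^2) = r := Real.sqrt_sq hr.le
  set u := Real.sqrt (T + r^2) with hu
  have hu2 : u^2 = T + r^2 := Real.sq_sqrt hs0.le
  have hur : r ≤ u := by
    rw [← hsr]; exact Real.sqrt_le_sqrt (by nlinarith)
  have hu0 : 0 < u := lt_of_lt_of_le hr hur
  set x := z^2 / (T + r^2) with hx
  set X := z^2 / r^2 with hX
  have hx0 : 0 ≤ x := by positivity
  have hxX : x ≤ X := by
    apply div_le_div_of_nonneg_left (sq_nonneg z) (by positivity)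
    nlinarith
  have hXx : X - x = T / r^2 * x := by
    rw [hX, hx]; field_simp; ring
  set e1 := Real.exp (-x) with he1
  set e2 := Real.exp (-X) with he2
  have he1pos : 0 < e1 := Real.exp_pos _
  have he1le : e1 ≤ 1 := Real.exp_le_one_iff.mpr (by linarith)
  have he21 : e2 ≤ e1 := Real.exp_le_exp.mpr (by linarith)
  have he2pos : 0 < e2 := Real.exp_pos _
  have hK1 : K c (T + r^2) z = c / u * e1 := by rw [K, he1, hx, hu]; ring_nf
  have hK2 : K c (r^2) z = c / r * e2 := by rw [K, he2, hX, hsr]; ring_nf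
  rw [hK1, hK2]
  have hsplit : c / u * e1 - c / r * e2 = (c/u - c/r) * e1 + c/r * (e1 - e2) := by ring
  have h2r : 2 * r * (u - r) ≤ T := by nlinarith
  have hA : c/r - c/u ≤ c * T / (2 * r^3) := by
    rw [div_sub_div _ _ hr.ne' hu0.ne', div_le_div_iff₀ (by positivity) (by positivity)]
    nlinarith [mul_le_mul_of_nonneg_left h2r hc,
      mul_nonneg (mul_nonneg hc hr.le) (sub_nonneg.mpr hur),
      mul_le_mul_of_nonneg_left (mul_le_mul_of_nonneg_left h2r hc) (mul_nonneg hr.le hr.le)]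
  have hA0 : c/u ≤ c/r := div_le_div_of_nonneg_left hc hr hur
  have hB1 : e1 - e2 ≤ e1 * (X - x) := by
    have h1 : e2 = e1 * Real.exp (-(X - x)) := by
      rw [he1, he2, ← Real.exp_add]; ring_nf
    have h2 : 1 - Real.exp (-(X-x)) ≤ X - x := one_sub_exp_neg_le
    calc e1 - e2 = e1 * (1 - Real.exp (-(X-x))) := by rw [h1]; ring
    _ ≤ e1 * (X - x) := by
        apply mul_le_mul_of_nonneg_left h2 he1pos.le
  have hxe : x * e1 ≤ 1 := x_exp_neg_le_one hx0
  have hB : c/r * (e1 - e2) ≤ c * T / r^3 := by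
    have : e1 * (X - x) ≤ T / r^2 := by
      rw [hXx]
      calc e1 * (T / r^2 * x) = T / r^2 * (x * e1) := by ring
      _ ≤ T / r^2 * 1 := by apply mul_le_mul_of_nonneg_left hxe (by positivity)
      _ = T / r^2 := mul_one _
    calc c/r * (e1 - e2) ≤ c/r * (e1 * (X - x)) := by
          apply mul_le_mul_of_nonneg_left hB1 (by positivity)
    _ ≤ c/r * (T / r^2) := by apply mul_le_mul_of_nonneg_left this (by positivity)
    _ = c * T / r^3 := by rw [div_mul_div_comm]; congr 1; ring
  have hB0 : 0 ≤ e1 - e2 := by linarith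
  have hd0 : 0 ≤ c/r - c/u := sub_nonneg.mpr hA0
  have hrest : 0 ≤ c/r * (e1 - e2) := mul_nonneg (by positivity) hB0
  have hneg : (c/u - c/r) * e1 = -((c/r - c/u) * e1) := by ring
  have hle1 : (c/r - c/u) * e1 ≤ c * T / (2*r^3) :=
    le_trans (mul_le_of_le_one_right hd0 he1le) hA
  have hct : 0 ≤ c * T / r^3 := by positivity
  have hq : (3/2) * c * T / r^3 - c * T / (2*r^3) = c * T / r^3 := by ring
  have hq2 : (3/2) * c * T / r^3 - c * T / r^3 = (1/2) * (c * T / r^3) := by ring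
  have hup : (c/u - c/r) * e1 ≤ 0 := by
    rw [hneg]; simp only [neg_nonpos]
    exact mul_nonneg hd0 he1pos.le
  rw [hsplit, abs_le]
  constructor
  · rw [hneg]; linarith
  · linarith

/-- the dominant Gaussian dominates the subtracted one. -/
lemma K_pair {γ₀ γ₁ γ₂ s₁ s₂ : ℝ} (h0 : 0 < γ₀) (h10 : 0 < γ₁)
    (h21 : γ₂ ≤ 1) (hs2 : 0 < s₂) (hle : s₂ ≤ s₁)
    (hkey : γ₁^6 * s₁ ≤ s₂) (z : ℝ) :
    γ₂ * K (γ₀^2 * γ₁^3) s₂ z ≤ K (γ₀^2) s₁ z := by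
  have hs1 : 0 < s₁ := lt_of_lt_of_le hs2 hle
  have hE : Real.exp (-z^2/s₂) ≤ Real.exp (-z^2/s₁) := by
    apply Real.exp_le_exp.mpr
    rw [neg_div, neg_div, neg_le_neg_iff]
    exact div_le_div_of_nonneg_left (sq_nonneg z) hs2 hle
  have hA : γ₀^2 * γ₁^3 / Real.sqrt s₂ ≤ γ₀^2 / Real.sqrt s₁ := by
    have hsq1 : 0 < Real.sqrt s₁ := Real.sqrt_pos.mpr hs1
    have hsq2 : 0 < Real.sqrt s₂ := Real.sqrt_pos.mpr hs2
    rw [div_le_div_iff₀ hsq2 hsq1]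
    have h1 : γ₁^3 * Real.sqrt s₁ = Real.sqrt (γ₁^6 * s₁) := by
      rw [show γ₁^6 = (γ₁^3)^2 by ring, Real.sqrt_mul (sq_nonneg _), Real.sqrt_sq (by positivity)]
    have h2 : Real.sqrt (γ₁^6 * s₁) ≤ Real.sqrt s₂ := Real.sqrt_le_sqrt hkey
    calc γ₀^2 * γ₁^3 * Real.sqrt s₁ = γ₀^2 * (γ₁^3 * Real.sqrt s₁) := by ring
    _ = γ₀^2 * Real.sqrt (γ₁^6 * s₁) := by rw [h1]
    _ ≤ γ₀^2 * Real.sqrt s₂ := mul_le_mul_of_nonneg_left h2 (by positivity)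
  calc γ₂ * K (γ₀^2 * γ₁^3) s₂ z ≤ 1 * K (γ₀^2 * γ₁^3) s₂ z := by
        apply mul_le_mul_of_nonneg_right h21 (K_nonneg (by positivity) z)
  _ = (γ₀^2 * γ₁^3 / Real.sqrt s₂) * Real.exp (-z^2/s₂) := by rw [one_mul]; rfl
  _ ≤ (γ₀^2 / Real.sqrt s₁) * Real.exp (-z^2/s₁) := by
      apply mul_le_mul hA hE (Real.exp_pos _).le (by positivity)
  _ = K (γ₀^2) s₁ z := rfl

/-- The slope function `y ↦ (∫₀^y h)/y`, extended by `h 0` at `0`. -/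
def Q (h : ℝ → ℝ) : ℝ → ℝ := fun y => if y = 0 then h 0 else (∫ z in (0:ℝ)..y, h z) / y

lemma Q_cont {h : ℝ → ℝ} (hc : Continuous h) : Continuous (Q h) := by
  rw [continuous_iff_continuousAt]
  intro y
  have hFd : ∀ x : ℝ, HasDerivAt (fun u => ∫ z in (0:ℝ)..u, h z) (h x) x := primderiv hc
  have hFc : Continuous (fun u => ∫ z in (0:ℝ)..u, h z) :=
    continuous_iff_continuousAt.mpr fun x => (hFd x).differentiableAt.continuousAt
  rcases eq_or_ne y 0 with rfl | hy
  · have hslope := hasDerivAt_iff_tendsto_slope.mp (hFd 0)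
    have hQ0 : Q h 0 = h 0 := by simp [Q]
    unfold ContinuousAt
    rw [hQ0, ← nhdsNE_sup_pure (0:ℝ), tendsto_sup]
    constructor
    · refine hslope.congr' ?_
      filter_upwards [self_mem_nhdsWithin] with x hx
      have hx0 : x ≠ 0 := hx
      simp [slope, Q, hx0, div_eq_inv_mul, intervalIntegral.integral_same]
    · simpa [hQ0] using tendsto_pure_nhds (Q h) 0
  · have heq : (fun x => (∫ z in (0:ℝ)..x, h z) / x) =ᶠ[nhds y] Q h := by
      filter_upwards [isOpen_compl_singleton.mem_nhds (by simpa using hy)] with x hx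
      have hx0 : x ≠ 0 := by simpa using hx
      simp [Q, hx0]
    exact (hFc.continuousAt.div continuousAt_id hy).congr heq

lemma Q_abs_le {h : ℝ → ℝ} {C : ℝ} (hC : ∀ z, |h z| ≤ C) (y : ℝ) :
    |Q h y| ≤ C := by
  rcases eq_or_ne y 0 with rfl | hy
  · simpa [Q] using hC 0
  · have hbd : ‖∫ z in (0:ℝ)..y, h z‖ ≤ C * |y - 0| :=
      intervalIntegral.norm_integral_le_of_norm_le_const
        (fun z _ => by simpa [Real.norm_eq_abs] using hC z)
    simp only [Q, hy, if_false, abs_div]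
    rw [div_le_iff₀ (abs_pos.mpr hy)]
    simpa [Real.norm_eq_abs, mul_comm] using hbd

lemma Q_ge_one {h : ℝ → ℝ} (hc : Continuous h) (h1 : ∀ z, 1 ≤ h z) (y : ℝ) :
    1 ≤ Q h y := by
  rcases eq_or_ne y 0 with rfl | hy
  · simpa [Q] using h1 0
  · simp only [Q, hy, if_false]
    rcases lt_or_gt_of_ne hy with hneg | hpos
    · rw [le_div_iff_of_neg hneg]
      have : (0:ℝ) - y ≤ ∫ z in y..(0:ℝ), h z := by
        have := intervalIntegral.integral_mono_on (le_of_lt hneg)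
          (intervalIntegrable_const : IntervalIntegrable (fun _ => (1:ℝ)) volume y 0)
          (hc.intervalIntegrable _ _) (fun x _ => h1 x)
        simpa using this
      have hsymm : (∫ z in (0:ℝ)..y, h z) = - ∫ z in y..(0:ℝ), h z :=
        intervalIntegral.integral_symm y 0
      rw [hsymm]; linarith
    · rw [le_div_iff₀ hpos]
      have := intervalIntegral.integral_mono_on (le_of_lt hpos)
        (intervalIntegrable_const : IntervalIntegrable (fun _ => (1:ℝ)) volume 0 y)
        (hc.intervalIntegrable _ _) (fun x _ => h1 x)
      simpa using this

lemma Q_mul {h : ℝ → ℝ} {y : ℝ} (hy : y ≠ 0) : y * Q h y = ∫ z in (0:ℝ)..y, h z := by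
  simp only [Q, hy, if_false]
  field_simp

/-- The derivative integrand of the shear flow. -/
def htF (ν M γ₀ γ₁ γ₂ t : ℝ) : ℝ → ℝ := fun z =>
  1 + M * (K (γ₀^2) (4*ν*t + γ₀^2) z - γ₂ * K (γ₀^2*γ₁^3) (4*ν*t + γ₀^2*γ₁^2) z)

lemma htF_cont (ν M γ₀ γ₁ γ₂ t : ℝ) : Continuous (htF ν M γ₀ γ₁ γ₂ t) :=
  continuous_const.add (continuous_const.mul
    ((K_cont _ _).sub (continuous_const.mul (K_cont _ _))))

lemma shear_hasDeriv (ν M γ₀ γ₁ γ₂ t : ℝ) (y : ℝ) :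
    HasDerivAt (shearFlow ν M γ₀ γ₁ γ₂ t) (htF ν M γ₀ γ₁ γ₂ t y) y := by
  have h1 := primderiv (K_cont (γ₀^2) (4*ν*t + γ₀^2)) y
  have h2 := primderiv (K_cont (γ₀^2*γ₁^3) (4*ν*t + γ₀^2*γ₁^2)) y
  exact (hasDerivAt_id y).add ((h1.sub (HasDerivAt.const_mul γ₂ h2)).const_mul M)

lemma shear_deriv (ν M γ₀ γ₁ γ₂ t : ℝ) :
    deriv (shearFlow ν M γ₀ γ₁ γ₂ t) = htF ν M γ₀ γ₁ γ₂ t :=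
  funext fun y => (shear_hasDeriv ν M γ₀ γ₁ γ₂ t y).deriv

lemma shear_deriv2 (ν M γ₀ γ₁ γ₂ t : ℝ) (y : ℝ) :
    deriv (deriv (shearFlow ν M γ₀ γ₁ γ₂ t)) y =
      M * ((γ₀^2 / Real.sqrt (4*ν*t + γ₀^2) *
              (Real.exp (-y^2/(4*ν*t + γ₀^2)) * (-(2*y)/(4*ν*t + γ₀^2))))
        - γ₂ * (γ₀^2*γ₁^3 / Real.sqrt (4*ν*t + γ₀^2*γ₁^2) *
              (Real.exp (-y^2/(4*ν*t + γ₀^2*γ₁^2)) * (-(2*y)/(4*ν*t + γ₀^2*γ₁^2))))) := by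
  rw [shear_deriv]
  have h1 := K_hasDeriv (γ₀^2) (4*ν*t + γ₀^2) y
  have h2 := K_hasDeriv (γ₀^2*γ₁^3) (4*ν*t + γ₀^2*γ₁^2) y
  exact (HasDerivAt.const_add 1 ((h1.sub (HasDerivAt.const_mul γ₂ h2)).const_mul M)).deriv

/-- integral representation -/
lemma shear_eq_integral (ν M γ₀ γ₁ γ₂ t : ℝ) (y : ℝ) :
    shearFlow ν M γ₀ γ₁ γ₂ t y = ∫ z in (0:ℝ)..y, htF ν M γ₀ γ₁ γ₂ t z := by
  have hi1 : IntervalIntegrable (K (γ₀^2) (4*ν*t + γ₀^2)) volume 0 y :=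
    (K_cont _ _).intervalIntegrable _ _
  have hi2 : IntervalIntegrable (fun z => γ₂ * K (γ₀^2*γ₁^3) (4*ν*t + γ₀^2*γ₁^2) z) volume 0 y :=
    (continuous_const.mul (K_cont _ _)).intervalIntegrable _ _
  show _ = ∫ z in (0:ℝ)..y,
      (1 + M * (K (γ₀^2) (4*ν*t + γ₀^2) z - γ₂ * K (γ₀^2*γ₁^3) (4*ν*t + γ₀^2*γ₁^2) z))
  rw [intervalIntegral.integral_add intervalIntegrable_const
      (((hi1.sub hi2)).const_mul M)]
  rw [intervalIntegral.integral_const, intervalIntegral.integral_const_mul,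
      intervalIntegral.integral_sub hi1 hi2, intervalIntegral.integral_const_mul]
  show shearFlow ν M γ₀ γ₁ γ₂ t y = (y - 0) • (1:ℝ) + M * (_ - γ₂ * _)
  simp only [sub_zero, smul_eq_mul, mul_one]
  rfl

end B3aux

open B3aux

/-- pointwise estimate of the error term `B₃`, proof of
Proposition 2.4. There is `C > 0` such that for all admissible parameters and all
`y ≠ 0`, `|b''(0,y)·(b(t,y) − b(0,y))/(b(t,y)·b(0,y))| ≤ C·(1+M²)·(νt/γ₀²)·e^{−y²/γ₀²}`;
moreover this quantity extends continuously to `y = 0` with the same bound. -/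
theorem B3_pointwise_estimate :
    ∃ C : ℝ, 0 < C ∧ ∀ ν M γ₀ γ₁ γ₂ t : ℝ, 0 < ν → 0 < M →
      γ₀ ∈ Set.Ioo (0:ℝ) 1 → γ₁ ∈ Set.Ioc (0:ℝ) 1 → γ₂ ∈ Set.Ioo (0:ℝ) 1 → 0 ≤ t →
      (∀ y : ℝ, y ≠ 0 →
        |deriv (deriv (shearFlow ν M γ₀ γ₁ γ₂ 0)) y
            * (shearFlow ν M γ₀ γ₁ γ₂ t y - shearFlow ν M γ₀ γ₁ γ₂ 0 y)
            / (shearFlow ν M γ₀ γ₁ γ₂ t y * shearFlow ν M γ₀ γ₁ γ₂ 0 y)|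
          ≤ C * (1 + M^2) * (ν * t / γ₀^2) * Real.exp (-y^2 / γ₀^2)) ∧
      (∃ g : ℝ → ℝ, Continuous g ∧
        (∀ y : ℝ, y ≠ 0 →
          g y = deriv (deriv (shearFlow ν M γ₀ γ₁ γ₂ 0)) y
            * (shearFlow ν M γ₀ γ₁ γ₂ t y - shearFlow ν M γ₀ γ₁ γ₂ 0 y)
            / (shearFlow ν M γ₀ γ₁ γ₂ t y * shearFlow ν M γ₀ γ₁ γ₂ 0 y)) ∧
        (∀ y : ℝ, |g y| ≤ C * (1 + M^2) * (ν * t / γ₀^2) * Real.exp (-y^2 / γ₀^2))) := by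
  refine ⟨24, by norm_num, ?_⟩
  intro ν M γ₀ γ₁ γ₂ t hν hM hγ₀ hγ₁ hγ₂ ht
  obtain ⟨hγ₀0, hγ₀1⟩ := hγ₀
  obtain ⟨hγ₁0, hγ₁1⟩ := hγ₁
  obtain ⟨hγ₂0, hγ₂1⟩ := hγ₂
  have hγ₀ne : γ₀ ≠ 0 := ne_of_gt hγ₀0
  have hγ₁ne : γ₁ ≠ 0 := ne_of_gt hγ₁0
  -- ≥ 1 for the derivative integrand
  have hge : ∀ t' : ℝ, 0 ≤ t' → ∀ z, 1 ≤ htF ν M γ₀ γ₁ γ₂ t' z := by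
    intro t' ht' z
    have h2 : γ₁^2 ≤ 1 := by nlinarith
    have h6 : γ₁^6 ≤ 1 := pow_le_one₀ hγ₁0.le hγ₁1
    have h62 : γ₁^6 ≤ γ₁^2 := pow_le_pow_of_le_one hγ₁0.le hγ₁1 (by norm_num)
    have hp : γ₂ * K (γ₀^2*γ₁^3) (4*ν*t' + γ₀^2*γ₁^2) z ≤ K (γ₀^2) (4*ν*t' + γ₀^2) z := by
      apply K_pair hγ₀0 hγ₁0 hγ₂1.le (by positivity)
      · nlinarith [sq_nonneg γ₀]
      · nlinarith [mul_le_mul_of_nonneg_right h6 (show (0:ℝ) ≤ 4*ν*t' by positivity),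
          mul_le_mul_of_nonneg_right h62 (sq_nonneg γ₀)]
    have : 0 ≤ M * (K (γ₀^2) (4*ν*t' + γ₀^2) z
        - γ₂ * K (γ₀^2*γ₁^3) (4*ν*t' + γ₀^2*γ₁^2) z) :=
      mul_nonneg hM.le (sub_nonneg.mpr hp)
    show 1 ≤ 1 + M * _
    linarith
  -- bound on the difference of the derivative integrands
  have hdb : ∀ z, |htF ν M γ₀ γ₁ γ₂ t z - htF ν M γ₀ γ₁ γ₂ 0 z| ≤ 12*M*ν*t/γ₀ := by
    intro z
    have hT0 : (0:ℝ) ≤ 4*ν*t := by positivity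
    have k1 : |K (γ₀^2) (4*ν*t + γ₀^2) z - K (γ₀^2) (γ₀^2) z|
        ≤ (3/2) * γ₀^2 * (4*ν*t) / γ₀^3 := Kdiff (by positivity) hγ₀0 hT0 z
    have k2 : |K (γ₀^2*γ₁^3) (4*ν*t + (γ₀*γ₁)^2) z - K (γ₀^2*γ₁^3) ((γ₀*γ₁)^2) z|
        ≤ (3/2) * (γ₀^2*γ₁^3) * (4*ν*t) / (γ₀*γ₁)^3 :=
      Kdiff (by positivity) (by positivity) hT0 z
    have e1 : (3/2) * γ₀^2 * (4*ν*t) / γ₀^3 = 6*ν*t/γ₀ := by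
      field_simp; ring
    have e2 : (3/2) * (γ₀^2*γ₁^3) * (4*ν*t) / (γ₀*γ₁)^3 = 6*ν*t/γ₀ := by
      field_simp; ring
    have hgg : (4*ν*t + (γ₀*γ₁)^2 : ℝ) = 4*ν*t + γ₀^2*γ₁^2 := by ring
    have hgg2 : ((γ₀*γ₁)^2 : ℝ) = γ₀^2*γ₁^2 := by ring
    rw [hgg, hgg2, e2] at k2
    rw [e1] at k1
    have hexp : htF ν M γ₀ γ₁ γ₂ t z - htF ν M γ₀ γ₁ γ₂ 0 z
        = M * ((K (γ₀^2) (4*ν*t + γ₀^2) z - K (γ₀^2) (γ₀^2) z)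
          - γ₂ * (K (γ₀^2*γ₁^3) (4*ν*t + γ₀^2*γ₁^2) z - K (γ₀^2*γ₁^3) (γ₀^2*γ₁^2) z)) := by
      show (1 + M * _) - (1 + M * _) = _
      rw [show (4*ν*0 + γ₀^2 : ℝ) = γ₀^2 by ring, show (4*ν*0 + γ₀^2*γ₁^2 : ℝ) = γ₀^2*γ₁^2 by ring]
      ring
    rw [hexp, abs_mul, abs_of_pos hM]
    have habs : |(K (γ₀^2) (4*ν*t + γ₀^2) z - K (γ₀^2) (γ₀^2) z)
          - γ₂ * (K (γ₀^2*γ₁^3) (4*ν*t + γ₀^2*γ₁^2) z - K (γ₀^2*γ₁^3) (γ₀^2*γ₁^2) z)|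
        ≤ 6*ν*t/γ₀ + 1 * (6*ν*t/γ₀) := by
      refine le_trans (abs_sub _ _) ?_
      apply add_le_add k1
      rw [abs_mul, abs_of_nonneg hγ₂0.le]
      exact mul_le_mul hγ₂1.le k2 (abs_nonneg _) one_pos.le
    calc M * |(K (γ₀^2) (4*ν*t + γ₀^2) z - K (γ₀^2) (γ₀^2) z)
          - γ₂ * (K (γ₀^2*γ₁^3) (4*ν*t + γ₀^2*γ₁^2) z - K (γ₀^2*γ₁^3) (γ₀^2*γ₁^2) z)|
        ≤ M * (6*ν*t/γ₀ + 1 * (6*ν*t/γ₀)) := mul_le_mul_of_nonneg_left habs hM.le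
    _ = 12*M*ν*t/γ₀ := by ring
  -- second derivative of the base flow
  have hb2 : ∀ y : ℝ, deriv (deriv (shearFlow ν M γ₀ γ₁ γ₂ 0)) y
      = (-2*M/γ₀) * (Real.exp (-y^2/γ₀^2) - γ₂ * Real.exp (-y^2/(γ₀^2*γ₁^2))) * y := by
    intro y
    rw [shear_deriv2]
    rw [show (4*ν*0 + γ₀^2 : ℝ) = γ₀^2 by ring,
        show (4*ν*0 + γ₀^2*γ₁^2 : ℝ) = γ₀^2*γ₁^2 by ring,
        Real.sqrt_sq hγ₀0.le,
        show Real.sqrt (γ₀^2*γ₁^2) = γ₀*γ₁ by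
          rw [show (γ₀^2*γ₁^2 : ℝ) = (γ₀*γ₁)^2 by ring]
          exact Real.sqrt_sq (by positivity)]
    field_simp
    ring
  -- shorthand
  set bt := shearFlow ν M γ₀ γ₁ γ₂ t with hbt_def
  set b0 := shearFlow ν M γ₀ γ₁ γ₂ 0 with hb0_def
  set Ht := htF ν M γ₀ γ₁ γ₂ t with hHt
  set H0 := htF ν M γ₀ γ₁ γ₂ 0 with hH0
  set dF : ℝ → ℝ := fun z => Ht z - H0 z with hdF
  have hHtc : Continuous Ht := htF_cont ν M γ₀ γ₁ γ₂ t
  have hH0c : Continuous H0 := htF_cont ν M γ₀ γ₁ γ₂ 0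
  have hdFc : Continuous dF := hHtc.sub hH0c
  have hQt1 : ∀ y, 1 ≤ Q Ht y := Q_ge_one hHtc (hge t ht)
  have hQ01 : ∀ y, 1 ≤ Q H0 y := Q_ge_one hH0c (hge 0 le_rfl)
  have hQd : ∀ y, |Q dF y| ≤ 12*M*ν*t/γ₀ := Q_abs_le hdb
  have hden : ∀ y, 0 < Q Ht y * Q H0 y := fun y =>
    mul_pos (lt_of_lt_of_le one_pos (hQt1 y)) (lt_of_lt_of_le one_pos (hQ01 y))
  -- identities for y ≠ 0
  have hbtQ : ∀ y : ℝ, y ≠ 0 → bt y = y * Q Ht y := by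
    intro y hy; rw [Q_mul hy]; exact shear_eq_integral ν M γ₀ γ₁ γ₂ t y
  have hb0Q : ∀ y : ℝ, y ≠ 0 → b0 y = y * Q H0 y := by
    intro y hy; rw [Q_mul hy]; exact shear_eq_integral ν M γ₀ γ₁ γ₂ 0 y
  have hΔQ : ∀ y : ℝ, y ≠ 0 → bt y - b0 y = y * Q dF y := by
    intro y hy
    rw [Q_mul hy, hbt_def, hb0_def,
        shear_eq_integral ν M γ₀ γ₁ γ₂ t y, shear_eq_integral ν M γ₀ γ₁ γ₂ 0 y]
    exact (intervalIntegral.integral_sub ((htF_cont ν M γ₀ γ₁ γ₂ t).intervalIntegrable _ _)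
      ((htF_cont ν M γ₀ γ₁ γ₂ 0).intervalIntegrable _ _)).symm
  -- the continuous extension
  set g : ℝ → ℝ := fun y =>
    ((-2*M/γ₀) * (Real.exp (-y^2/γ₀^2) - γ₂ * Real.exp (-y^2/(γ₀^2*γ₁^2)))) * Q dF y
      / (Q Ht y * Q H0 y) with hg_def
  have hgcont : Continuous g := by
    apply Continuous.div
    · apply Continuous.mul ?_ (Q_cont hdFc)
      apply continuous_const.mul
      apply Continuous.sub
      · exact Real.continuous_exp.comp (by fun_prop)
      · exact continuous_const.mul (Real.continuous_exp.comp (by fun_prop))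
    · exact (Q_cont hHtc).mul (Q_cont hH0c)
    · exact fun y => ne_of_gt (hden y)
  have hgeq : ∀ y : ℝ, y ≠ 0 →
      g y = deriv (deriv b0) y * (bt y - b0 y) / (bt y * b0 y) := by
    intro y hy
    rw [hb2 y, hΔQ y hy, hbtQ y hy, hb0Q y hy]
    show ((-2*M/γ₀) * (Real.exp (-y^2/γ₀^2) - γ₂ * Real.exp (-y^2/(γ₀^2*γ₁^2)))) * Q dF y
      / (Q Ht y * Q H0 y) = _
    have hne1 : Q Ht y ≠ 0 := ne_of_gt (lt_of_lt_of_le one_pos (hQt1 y))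
    have hne2 : Q H0 y ≠ 0 := ne_of_gt (lt_of_lt_of_le one_pos (hQ01 y))
    field_simp
  -- the bound on g
  have hgbd : ∀ y : ℝ, |g y| ≤ 24 * (1 + M^2) * (ν * t / γ₀^2) * Real.exp (-y^2 / γ₀^2) := by
    intro y
    set E1 := Real.exp (-y^2/γ₀^2) with hE1
    set E2 := Real.exp (-y^2/(γ₀^2*γ₁^2)) with hE2
    have hE1pos : 0 < E1 := Real.exp_pos _
    have hE2pos : 0 < E2 := Real.exp_pos _
    have hE21 : E2 ≤ E1 := by
      apply Real.exp_le_exp.mpr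
      rw [neg_div, neg_div, neg_le_neg_iff]
      apply div_le_div_of_nonneg_left (sq_nonneg y) (by positivity)
      have h2 : γ₁^2 ≤ 1 := by nlinarith
      nlinarith [mul_le_mul_of_nonneg_left h2 (sq_nonneg γ₀)]
    have hP : |(-2*M/γ₀) * (E1 - γ₂ * E2)| ≤ 2*M/γ₀ * E1 := by
      rw [abs_mul]
      have h1 : |(-2*M/γ₀ : ℝ)| = 2*M/γ₀ := by
        rw [show (-2*M/γ₀ : ℝ) = -(2*M/γ₀) by ring, abs_neg, abs_of_pos (by positivity)]
      rw [h1]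
      apply mul_le_mul_of_nonneg_left ?_ (by positivity)
      rw [abs_of_nonneg (by nlinarith)]
      nlinarith
    have hnum : |((-2*M/γ₀) * (E1 - γ₂ * E2)) * Q dF y| ≤ (2*M/γ₀ * E1) * (12*M*ν*t/γ₀) := by
      rw [abs_mul]
      apply mul_le_mul hP (hQd y) (abs_nonneg _) (by positivity)
    have hgy : |g y| = |((-2*M/γ₀) * (E1 - γ₂ * E2)) * Q dF y| / (Q Ht y * Q H0 y) := by
      rw [hg_def]
      show |_ / (Q Ht y * Q H0 y)| = _
      rw [abs_div, abs_of_pos (hden y)]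
    have hden1 : 1 ≤ Q Ht y * Q H0 y := by
      calc (1:ℝ) = 1 * 1 := by norm_num
      _ ≤ Q Ht y * Q H0 y := mul_le_mul (hQt1 y) (hQ01 y) one_pos.le
          (le_trans one_pos.le (hQt1 y))
    calc |g y| = |((-2*M/γ₀) * (E1 - γ₂ * E2)) * Q dF y| / (Q Ht y * Q H0 y) := hgy
    _ ≤ |((-2*M/γ₀) * (E1 - γ₂ * E2)) * Q dF y| / 1 := by
        apply div_le_div_of_nonneg_left (abs_nonneg _) one_pos hden1
    _ = |((-2*M/γ₀) * (E1 - γ₂ * E2)) * Q dF y| := div_one _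
    _ ≤ (2*M/γ₀ * E1) * (12*M*ν*t/γ₀) := hnum
    _ = 24 * M^2 * (ν * t / γ₀^2) * E1 := by field_simp; ring
    _ ≤ 24 * (1 + M^2) * (ν * t / γ₀^2) * E1 := by
        have h1 : (0:ℝ) ≤ (ν * t / γ₀^2) * E1 := by positivity
        nlinarith
  refine ⟨fun y hy => ?_, g, hgcont, hgeq, hgbd⟩
  rw [← hgeq y hy]
  exact hgbd y
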